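/- Let f ∈ C²(ℝ^d) with f ≥ 0, f(0)=0, and quadratic growth f(x) ≥ ‖x‖²/(2C) for all x, for some C > 0. Then for any r > √(Cd·t) with t > 0, ∫_{‖x‖ ≥ r} e^{-f(x)/t} dx ≤ (2πCt)^{d/2}·exp(−(r − √(Cdt))²/(2tC)). -/

import Mathlib

set_option maxHeartbeats 1000000

open Real MeasureTheory

lemma integrable_gauss {d : ℕ} {b : ℝ} (hb : 0 < b) :
    Integrable (fun x : EuclideanSpace ℝ (Fin d) => Real.exp (-b * ‖x‖ ^ 2)) := by
  have h := (GaussianFourier.integrable_cexp_neg_mul_sq_norm_add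
    (b := (b : ℂ)) (by simpa using hb) 0 (0 : EuclideanSpace ℝ (Fin d))).norm
  convert h using 2 with x
  rw [Complex.norm_exp]
  norm_num
  left
  norm_cast

theorem gaussian_tail_bound {d : ℕ}
    (f : EuclideanSpace ℝ (Fin d) → ℝ) (C t r : ℝ) (hC : 0 < C) (ht : 0 < t)
    (hf : ContDiff ℝ 2 f) (hnn : ∀ x, 0 ≤ f x) (hf0 : f 0 = 0)
    (hQG : ∀ x, ‖x‖ ^ 2 / (2 * C) ≤ f x)
    (hr : Real.sqrt (C * d * t) < r) :
    (∫ x in {x : EuclideanSpace ℝ (Fin d) | r ≤ ‖x‖}, Real.exp (-f x / t)) ≤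
      (2 * Real.pi * C * t) ^ ((d : ℝ) / 2) *
        Real.exp (-(r - Real.sqrt (C * d * t)) ^ 2 / (2 * t * C)) := by
  have hr0 : 0 < r := lt_of_le_of_lt (Real.sqrt_nonneg _) hr
  rcases Nat.eq_zero_or_pos d with hd | hd
  · subst hd
    have hS : {x : EuclideanSpace ℝ (Fin 0) | r ≤ ‖x‖} = ∅ := by
      ext x
      simp only [Set.mem_setOf_eq, Set.mem_empty_iff_false, iff_false, not_le]
      have : x = 0 := Subsingleton.elim x 0
      rw [this, norm_zero]; exact hr0
    rw [hS, Measure.restrict_empty, integral_zero_measure]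
    positivity
  -- main case
  set σ2 : ℝ := C * t with hσ2
  have hσ2pos : 0 < σ2 := mul_pos hC ht
  have hdpos : (0:ℝ) < d := by exact_mod_cast hd
  set a : ℝ := Real.sqrt (C * d * t) with ha
  have ha2 : a ^ 2 = d * σ2 := by
    rw [ha, sq_sqrt (by positivity)]; ring
  have hapos : 0 < a := by
    rw [ha]; apply Real.sqrt_pos.2; positivity
  have hra : a < r := hr
  have hr2 : d * σ2 < r ^ 2 := by
    rw [← ha2]; nlinarith
  set s : ℝ := (1 / σ2 - d / r ^ 2) / 2 with hs
  set b : ℝ := d / (2 * r ^ 2) with hb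
  have hbpos : 0 < b := by positivity
  have hspos : 0 < s := by
    rw [hs]
    have : (d : ℝ) / r ^ 2 < 1 / σ2 := by
      rw [div_lt_div_iff₀ (by positivity) hσ2pos]
      nlinarith
    linarith
  have hsb : s + b = 1 / (2 * σ2) := by
    rw [hs, hb]; field_simp; ring
  -- pointwise bound on the set
  have hpt : ∀ x : EuclideanSpace ℝ (Fin d), r ≤ ‖x‖ →
      Real.exp (-f x / t) ≤ Real.exp (-(s * r ^ 2)) * Real.exp (-b * ‖x‖ ^ 2) := by
    intro x hx
    rw [← Real.exp_add, Real.exp_le_exp]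
    have hx2 : r ^ 2 ≤ ‖x‖ ^ 2 := by nlinarith
    have h1 : ‖x‖ ^ 2 / (2 * σ2) ≤ f x / t := by
      have h := hQG x
      have he : ‖x‖ ^ 2 / (2 * σ2) = (‖x‖ ^ 2 / (2 * C)) / t := by
        rw [hσ2]; ring
      rw [he]
      gcongr
    have heq : ‖x‖ ^ 2 / (2 * σ2) = (s + b) * ‖x‖ ^ 2 := by rw [hsb]; ring
    have h2 : -f x / t ≤ -((s + b) * ‖x‖ ^ 2) := by
      rw [← heq, neg_div]; linarith
    nlinarith [mul_le_mul_of_nonneg_left hx2 hspos.le]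
  -- integrability
  set S : Set (EuclideanSpace ℝ (Fin d)) := {x | r ≤ ‖x‖} with hSdef
  have hSmeas : MeasurableSet S := (isClosed_le continuous_const continuous_norm).measurableSet
  have hgint : Integrable
      (fun x : EuclideanSpace ℝ (Fin d) => Real.exp (-(s * r ^ 2)) * Real.exp (-b * ‖x‖ ^ 2)) :=
    (integrable_gauss hbpos).const_mul _
  have hfcont : Continuous fun x : EuclideanSpace ℝ (Fin d) => Real.exp (-f x / t) :=
    Real.continuous_exp.comp ((hf.continuous.neg).div_const t)
  have hfint : IntegrableOn (fun x => Real.exp (-f x / t)) S := by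
    refine Integrable.mono hgint.integrableOn hfcont.aestronglyMeasurable.restrict ?_
    filter_upwards [ae_restrict_mem hSmeas] with x hx
    rw [Real.norm_of_nonneg (Real.exp_nonneg _), Real.norm_of_nonneg (by positivity)]
    exact hpt x hx
  have step1 : (∫ x in S, Real.exp (-f x / t)) ≤
      ∫ x in S, Real.exp (-(s * r ^ 2)) * Real.exp (-b * ‖x‖ ^ 2) :=
    setIntegral_mono_on hfint hgint.integrableOn hSmeas (fun x hx => hpt x hx)
  have step2 : (∫ x in S, Real.exp (-(s * r ^ 2)) * Real.exp (-b * ‖x‖ ^ 2)) ≤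
      ∫ x : EuclideanSpace ℝ (Fin d), Real.exp (-(s * r ^ 2)) * Real.exp (-b * ‖x‖ ^ 2) :=
    setIntegral_le_integral hgint (Filter.Eventually.of_forall fun x => by positivity)
  have step3 : (∫ x : EuclideanSpace ℝ (Fin d),
      Real.exp (-(s * r ^ 2)) * Real.exp (-b * ‖x‖ ^ 2)) =
      Real.exp (-(s * r ^ 2)) * (π / b) ^ ((d : ℝ) / 2) := by
    rw [integral_const_mul, GaussianFourier.integral_rexp_neg_mul_sq_norm hbpos]
    norm_num [finrank_euclideanSpace_fin]
  -- final algebra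
  have hπb : π / b = 2 * π * r ^ 2 / d := by
    rw [hb]; field_simp
  have hX1pos : 0 < 2 * π * r ^ 2 / (d : ℝ) := by positivity
  have hX2pos : 0 < 2 * π * C * t := by positivity
  have hXeq : 2 * π * r ^ 2 / (d : ℝ) = (2 * π * C * t) * (r / a) ^ 2 := by
    rw [div_pow]
    rw [ha2, hσ2]
    field_simp
  have hlogX : Real.log (2 * π * r ^ 2 / (d : ℝ)) =
      Real.log (2 * π * C * t) + 2 * Real.log (r / a) := by
    rw [hXeq, Real.log_mul (ne_of_gt hX2pos) (by positivity), Real.log_pow]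
    push_cast; ring
  have hlog : Real.log (r / a) ≤ r / a - 1 :=
    Real.log_le_sub_one_of_pos (by positivity)
  have e1 : s * r ^ 2 = r ^ 2 / (2 * σ2) - d / 2 := by
    rw [hs]; field_simp
  have e2 : (r - a) ^ 2 / (2 * t * C) = r ^ 2 / (2 * σ2) - r * a / σ2 + d / 2 := by
    have h : (r - a) ^ 2 = r ^ 2 - 2 * (r * a) + d * σ2 := by rw [← ha2]; ring
    rw [h, hσ2]; field_simp
  have e3 : (d : ℝ) * (r / a) = r * a / σ2 := by
    field_simp
    nlinarith [ha2]
  calc (∫ x in S, Real.exp (-f x / t))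
      ≤ Real.exp (-(s * r ^ 2)) * (π / b) ^ ((d : ℝ) / 2) := by
        rw [← step3]; exact le_trans step1 step2
    _ ≤ (2 * π * C * t) ^ ((d : ℝ) / 2) * Real.exp (-(r - a) ^ 2 / (2 * t * C)) := by
        rw [hπb, Real.rpow_def_of_pos hX1pos, Real.rpow_def_of_pos hX2pos,
          ← Real.exp_add, ← Real.exp_add, Real.exp_le_exp, hlogX]
        have hd2 : (d : ℝ) * Real.log (r / a) ≤ (d : ℝ) * (r / a - 1) :=
          mul_le_mul_of_nonneg_left hlog hdpos.le
        rw [mul_sub, mul_one, e3] at hd2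
        have e2' : -(r - a) ^ 2 / (2 * t * C) = -((r - a) ^ 2 / (2 * t * C)) := by ring
        linarith [e1, e2, e2']
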